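/- The path-covering number is stable under 2-switch: for every simple graph G on a finite vertex set V and every graph G' obtained from G by a 2-switch, |π(G') − π(G)| ≤ 1. -/

import Mathlib

open SimpleGraph

/-- Four pairwise distinct vertices `a,b,c,d` with `ab, cd ∈ E(G)` and `ac, bd ∉ E(G)`:
the condition under which the 2-switch of `G` at `(a,b;c,d)` is performed. -/
def Switchable {V : Type*} (G : SimpleGraph V) (a b c d : V) : Prop :=
  a ≠ b ∧ a ≠ c ∧ a ≠ d ∧ b ≠ c ∧ b ≠ d ∧ c ≠ d ∧
    G.Adj a b ∧ G.Adj c d ∧ ¬ G.Adj a c ∧ ¬ G.Adj b d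

/-- The 2-switch of `G` at `(a,b;c,d)`: the graph on `V` with edge set
`(E(G) \ {ab, cd}) ∪ {ac, bd}`. -/
def twoSwitch {V : Type*} (G : SimpleGraph V) (a b c d : V) : SimpleGraph V :=
  SimpleGraph.fromEdgeSet ((G.edgeSet \ {s(a, b), s(c, d)}) ∪ {s(a, c), s(b, d)})

/-- `G'` is obtained from `G` by a 2-switch. -/
def ObtainedByTwoSwitch {V : Type*} (G G' : SimpleGraph V) : Prop :=
  ∃ a b c d : V, Switchable G a b c d ∧ G' = twoSwitch G a b c d

/-- The path-covering number `π(G)`: the minimum number of pairwise vertex-disjoint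
paths of `G` whose vertex sets together contain all vertices of `G`. -/
noncomputable def pathCoverNum {V : Type*} [Fintype V] (G : SimpleGraph V) : ℕ :=
  sInf {n : ℕ | ∃ P : Fin n → Σ u v : V, G.Walk u v,
    (∀ i, (P i).2.2.IsPath) ∧
    (∀ i j, i ≠ j → ∀ v : V, v ∈ (P i).2.2.support → v ∉ (P j).2.2.support) ∧
    (∀ v : V, ∃ i, v ∈ (P i).2.2.support)}

/-! ### Auxiliary list lemmas -/

namespace TwoSwitchAux

variable {V : Type*}

lemma head?_append_left (q1 q2 : List V) (h : q1 ≠ []) :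
    (q1 ++ q2).head? = q1.head? := by
  cases q1 with
  | nil => exact absurd rfl h
  | cons x t => simp

lemma getLast?_cons_of_ne_nil (x : V) (l : List V) (h : l ≠ []) :
    (x :: l).getLast? = l.getLast? := by
  cases l with
  | nil => exact absurd rfl h
  | cons y t => exact List.getLast?_cons_cons

lemma getLast?_append_right (p1 p2 : List V) (h : p2 ≠ []) :
    (p1 ++ p2).getLast? = p2.getLast? := by
  induction p1 with
  | nil => simp
  | cons x t ih =>
      have ht : t ++ p2 ≠ [] := by
        intro hx
        rcases List.append_eq_nil_iff.mp hx with ⟨_, h2⟩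
        exact h h2
      rw [List.cons_append, getLast?_cons_of_ne_nil x (t ++ p2) ht, ih]

lemma mem_of_getLast?' {l : List V} {v : V} (h : l.getLast? = some v) : v ∈ l := by
  have : l.reverse.head? = some v := by rw [List.head?_reverse]; exact h
  have := List.mem_of_mem_head? this
  exact List.mem_reverse.mp this

/-- `v` is an endpoint (head or last) of the list `m`. -/
def EndAt (m : List V) (v : V) : Prop := m.head? = some v ∨ m.getLast? = some v

lemma EndAt.mem {m : List V} {v : V} (h : EndAt m v) : v ∈ m := by
  rcases h with h | h
  · exact List.mem_of_mem_head? h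
  · exact mem_of_getLast?' h

/-- some segment of `S` has `v` as an endpoint -/
def HasEnd (S : List (List V)) (v : V) : Prop := ∃ u ∈ S, EndAt u v

lemma HasEnd.mem_flatten {S : List (List V)} {v : V} (h : HasEnd S v) : v ∈ S.flatten := by
  rcases h with ⟨u, hu, he⟩
  exact List.mem_flatten.mpr ⟨u, hu, he.mem⟩

lemma HasEnd.append_left {S T : List (List V)} {v : V} (h : HasEnd S v) : HasEnd (S ++ T) v := by
  rcases h with ⟨u, hu, he⟩; exact ⟨u, List.mem_append_left _ hu, he⟩

lemma HasEnd.append_right {S T : List (List V)} {v : V} (h : HasEnd T v) : HasEnd (S ++ T) v := by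
  rcases h with ⟨u, hu, he⟩; exact ⟨u, List.mem_append_right _ hu, he⟩

/-- merge information: two distinct segments, one ending at `a` and one at `c`,
or one ending at `b` and one at `d`. -/
def MergeInfo (S : List (List V)) (a b c d : V) : Prop :=
  ∃ u ∈ S, ∃ w ∈ S, u ≠ w ∧ ((EndAt u a ∧ EndAt w c) ∨ (EndAt u b ∧ EndAt w d))

lemma MergeInfo.append_left {S T : List (List V)} {a b c d : V} (h : MergeInfo S a b c d) :
    MergeInfo (S ++ T) a b c d := by
  rcases h with ⟨u, hu, w, hw, hne, hcase⟩
  exact ⟨u, List.mem_append_left _ hu, w, List.mem_append_left _ hw, hne, hcase⟩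

lemma MergeInfo.append_right {S T : List (List V)} {a b c d : V} (h : MergeInfo T a b c d) :
    MergeInfo (S ++ T) a b c d := by
  rcases h with ⟨u, hu, w, hw, hne, hcase⟩
  exact ⟨u, List.mem_append_right _ hu, w, List.mem_append_right _ hw, hne, hcase⟩

/-- the outcome of splitting a path system at the pairs `{a,b}` and `{c,d}` -/
def GoodSplit (S : List (List V)) (n : ℕ) (a b c d : V) : Prop :=
  S.length = n ∨
  (S.length = n + 1 ∧ ((HasEnd S a ∧ HasEnd S b) ∨ (HasEnd S c ∧ HasEnd S d))) ∨
  (S.length = n + 2 ∧ HasEnd S a ∧ HasEnd S b ∧ HasEnd S c ∧ HasEnd S d ∧ MergeInfo S a b c d)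

/-- strengthening of the relation along a cut pair -/
def Rcut (R : V → V → Prop) (a b : V) : V → V → Prop :=
  fun x y => R x y ∧ s(x, y) ≠ s(a, b)

lemma chain_strengthen {R : V → V → Prop} {a b : V} :
    ∀ {m : List V}, (a ∉ m ∨ b ∉ m) → m.Chain' R → m.Chain' (Rcut R a b)
  | [], _, _ => List.isChain_nil
  | [x], _, _ => List.isChain_singleton _
  | x :: y :: t, hab, hc => by
      simp only [List.Chain', List.isChain_cons_cons] at hc ⊢
      refine ⟨⟨hc.1, ?_⟩, chain_strengthen ?_ hc.2⟩
      · intro he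
        rw [Sym2.eq_iff] at he
        rcases hab with h | h <;>
          rcases he with ⟨h1, h2⟩ | ⟨h1, h2⟩ <;> subst h1 <;> simp at h <;> simp [← h2] at h
      · rcases hab with h | h
        · exact Or.inl (fun hm => h (List.mem_cons_of_mem _ hm))
        · exact Or.inr (fun hm => h (List.mem_cons_of_mem _ hm))

lemma split_lemma (R : V → V → Prop) (a b : V) :
    ∀ l : List V, l.Nodup → l.Chain' R →
      l.Chain' (Rcut R a b) ∨
      ∃ p q : List V, l = p ++ q ∧ p ≠ [] ∧ q ≠ [] ∧
        ((p.getLast? = some a ∧ q.head? = some b) ∨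
         (p.getLast? = some b ∧ q.head? = some a)) ∧
        p.Chain' (Rcut R a b) ∧ q.Chain' (Rcut R a b)
  | [] => fun _ _ => Or.inl List.isChain_nil
  | [x] => fun _ _ => Or.inl (List.isChain_singleton _)
  | x :: y :: t => fun hnd hc => by
      simp only [List.Chain', List.isChain_cons_cons] at hc
      by_cases hxy : s(x, y) = s(a, b)
      · have hx : x ∉ y :: t := by
          have := hnd
          rw [List.nodup_cons] at this
          exact this.1
        rw [Sym2.eq_iff] at hxy
        refine Or.inr ⟨[x], y :: t, rfl, by simp, by simp, ?_, List.isChain_singleton _, ?_⟩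
        · rcases hxy with ⟨h1, h2⟩ | ⟨h1, h2⟩
          · exact Or.inl ⟨by simp [h1], by simp [h2]⟩
          · exact Or.inr ⟨by simp [h1], by simp [h2]⟩
        · apply chain_strengthen ?_ hc.2
          rcases hxy with ⟨h1, h2⟩ | ⟨h1, h2⟩
          · exact Or.inl (h1 ▸ hx)
          · exact Or.inr (h1 ▸ hx)
      · rcases split_lemma R a b (y :: t) hnd.of_cons hc.2 with hch | ⟨p, q, heq, hp, hq, hend, hcp, hcq⟩
        · exact Or.inl (List.isChain_cons_cons.mpr ⟨⟨hc.1, hxy⟩, hch⟩)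
        · cases p with
          | nil => exact absurd rfl hp
          | cons z p' =>
              have hz : z = y := by
                have := congrArg List.head? heq
                simp at this
                exact this.symm
              subst hz
              have ht : t = p' ++ q := by
                have := congrArg List.tail heq
                simpa using this
              refine Or.inr ⟨x :: z :: p', q, by simp [ht], by simp, hq, ?_, ?_, hcq⟩
              · rwa [List.getLast?_cons_cons]
              · exact List.isChain_cons_cons.mpr ⟨⟨hc.1, hxy⟩, hcp⟩

lemma ne_of_disjoint {m1 m2 : List V} (h : m1.Disjoint m2) (h1 : m1 ≠ []) : m1 ≠ m2 := by
  rcases List.exists_mem_of_ne_nil m1 h1 with ⟨x, hx⟩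
  intro he
  exact h hx (he ▸ hx)

/-- Splitting a single nonempty nodup chain at the pairs `{a,b}` and then `{c,d}`. -/
lemma single_split (R : V → V → Prop) (a b c d : V) (l : List V) (hne : l ≠ [])
    (hnd : l.Nodup) (hc : l.Chain' R) :
    ∃ S : List (List V), S.flatten = l ∧
      (∀ m ∈ S, m ≠ [] ∧ m.Chain' (Rcut (Rcut R a b) c d)) ∧
      GoodSplit S 1 a b c d := by
  rcases split_lemma R a b l hnd hc with h1 | ⟨p, q, rfl, hp, hq, hend, hcp, hcq⟩
  · rcases split_lemma (Rcut R a b) c d l hnd h1 with h2 | ⟨p, q, rfl, hp, hq, hend, hcp, hcq⟩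
    · exact ⟨[l], by simp, by simp [hne, h2], Or.inl (by simp)⟩
    · refine ⟨[p, q], by simp, ?_, Or.inr (Or.inl ⟨by simp, Or.inr ⟨?_, ?_⟩⟩)⟩
      · intro m hm
        simp only [List.mem_cons, List.not_mem_nil, or_false] at hm
        rcases hm with rfl | rfl
        · exact ⟨hp, hcp⟩
        · exact ⟨hq, hcq⟩
      · rcases hend with ⟨h1', h2'⟩ | ⟨h1', h2'⟩
        · exact ⟨p, by simp, Or.inr h1'⟩
        · exact ⟨q, by simp, Or.inl h2'⟩
      · rcases hend with ⟨h1', h2'⟩ | ⟨h1', h2'⟩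
        · exact ⟨q, by simp, Or.inl h2'⟩
        · exact ⟨p, by simp, Or.inr h1'⟩
  · -- the pair {a,b} was cut: l = p ++ q
    have hnd' := hnd
    rw [List.nodup_append'] at hnd'
    obtain ⟨hndp, hndq, hdisj⟩ := hnd'
    rcases split_lemma (Rcut R a b) c d p hndp hcp with h1p | ⟨p1, p2, rfl, hp1, hp2, hend2, hcp1, hcp2⟩
    · rcases split_lemma (Rcut R a b) c d q hndq hcq with h1q | ⟨q1, q2, rfl, hq1, hq2, hend2, hcq1, hcq2⟩
      · -- only {a,b} cut
        refine ⟨[p, q], by simp, ?_, Or.inr (Or.inl ⟨by simp, Or.inl ⟨?_, ?_⟩⟩)⟩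
        · intro m hm
          simp only [List.mem_cons, List.not_mem_nil, or_false] at hm
          rcases hm with rfl | rfl
          · exact ⟨hp, h1p⟩
          · exact ⟨hq, h1q⟩
        · rcases hend with ⟨h1', h2'⟩ | ⟨h1', h2'⟩
          · exact ⟨p, by simp, Or.inr h1'⟩
          · exact ⟨q, by simp, Or.inl h2'⟩
        · rcases hend with ⟨h1', h2'⟩ | ⟨h1', h2'⟩
          · exact ⟨q, by simp, Or.inl h2'⟩
          · exact ⟨p, by simp, Or.inr h1'⟩
      · -- {a,b} cut in l, {c,d} cut inside q = q1 ++ q2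
        have hq1q2disj : q1.Disjoint q2 := by
          rw [List.nodup_append'] at hndq
          exact hndq.2.2
        have hpq1 : p ≠ q1 := ne_of_disjoint
          (fun x hx hx2 => hdisj hx (List.mem_append_left _ hx2)) hp
        have hpq2 : p ≠ q2 := ne_of_disjoint
          (fun x hx hx2 => hdisj hx (List.mem_append_right _ hx2)) hp
        have hq12 : q1 ≠ q2 := ne_of_disjoint hq1q2disj hq1
        have hhead : (q1 ++ q2).head? = q1.head? := head?_append_left q1 q2 hq1
        refine ⟨[p, q1, q2], by simp, ?_, Or.inr (Or.inr ⟨by simp, ?_, ?_, ?_, ?_, ?_⟩)⟩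
        · intro m hm
          simp only [List.mem_cons, List.not_mem_nil, or_false] at hm
          rcases hm with rfl | rfl | rfl
          · exact ⟨hp, h1p⟩
          · exact ⟨hq1, hcq1⟩
          · exact ⟨hq2, hcq2⟩
        · -- HasEnd a
          rcases hend with ⟨h1', _⟩ | ⟨_, h2'⟩
          · exact ⟨p, by simp, Or.inr h1'⟩
          · exact ⟨q1, by simp, Or.inl (by rw [hhead] at h2'; exact h2')⟩
        · -- HasEnd b
          rcases hend with ⟨_, h2'⟩ | ⟨h1', _⟩
          · exact ⟨q1, by simp, Or.inl (by rw [hhead] at h2'; exact h2')⟩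
          · exact ⟨p, by simp, Or.inr h1'⟩
        · -- HasEnd c
          rcases hend2 with ⟨h1', _⟩ | ⟨_, h2'⟩
          · exact ⟨q1, by simp, Or.inr h1'⟩
          · exact ⟨q2, by simp, Or.inl h2'⟩
        · -- HasEnd d
          rcases hend2 with ⟨_, h2'⟩ | ⟨h1', _⟩
          · exact ⟨q2, by simp, Or.inl h2'⟩
          · exact ⟨q1, by simp, Or.inr h1'⟩
        · -- MergeInfo
          rcases hend with ⟨hpa, hqb⟩ | ⟨hpb, hqa⟩ <;>
            rcases hend2 with ⟨h1c, h2d⟩ | ⟨h1d, h2c⟩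
          · exact ⟨p, by simp, q1, by simp, hpq1, Or.inl ⟨Or.inr hpa, Or.inr h1c⟩⟩
          · exact ⟨p, by simp, q2, by simp, hpq2, Or.inl ⟨Or.inr hpa, Or.inl h2c⟩⟩
          · exact ⟨p, by simp, q2, by simp, hpq2, Or.inr ⟨Or.inr hpb, Or.inl h2d⟩⟩
          · exact ⟨q1, by simp, q2, by simp, hq12,
              Or.inl ⟨Or.inl (by rw [hhead] at hqa; exact hqa), Or.inl h2c⟩⟩
    · -- {a,b} cut in l, {c,d} cut inside p = p1 ++ p2
      rcases split_lemma (Rcut R a b) c d q hndq hcq with h1q | ⟨q1, q2, heqq, hq1, hq2, hend3, _, _⟩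
      · have hp1p2disj : p1.Disjoint p2 := by
          rw [List.nodup_append'] at hndp
          exact hndp.2.2
        have hp1q : p1 ≠ q := ne_of_disjoint
          (fun x hx hx2 => hdisj (List.mem_append_left _ hx) hx2) hp1
        have hp2q : p2 ≠ q := ne_of_disjoint
          (fun x hx hx2 => hdisj (List.mem_append_right _ hx) hx2) hp2
        have hp12 : p1 ≠ p2 := ne_of_disjoint hp1p2disj hp1
        have hlast : (p1 ++ p2).getLast? = p2.getLast? := getLast?_append_right p1 p2 hp2
        refine ⟨[p1, p2, q], by simp, ?_, Or.inr (Or.inr ⟨by simp, ?_, ?_, ?_, ?_, ?_⟩)⟩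
        · intro m hm
          simp only [List.mem_cons, List.not_mem_nil, or_false] at hm
          rcases hm with rfl | rfl | rfl
          · exact ⟨hp1, hcp1⟩
          · exact ⟨hp2, hcp2⟩
          · exact ⟨hq, h1q⟩
        · -- HasEnd a
          rcases hend with ⟨h1', _⟩ | ⟨_, h2'⟩
          · exact ⟨p2, by simp, Or.inr (by rw [hlast] at h1'; exact h1')⟩
          · exact ⟨q, by simp, Or.inl h2'⟩
        · -- HasEnd b
          rcases hend with ⟨_, h2'⟩ | ⟨h1', _⟩
          · exact ⟨q, by simp, Or.inl h2'⟩
          · exact ⟨p2, by simp, Or.inr (by rw [hlast] at h1'; exact h1')⟩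
        · -- HasEnd c
          rcases hend2 with ⟨h1', _⟩ | ⟨_, h2'⟩
          · exact ⟨p1, by simp, Or.inr h1'⟩
          · exact ⟨p2, by simp, Or.inl h2'⟩
        · -- HasEnd d
          rcases hend2 with ⟨_, h2'⟩ | ⟨h1', _⟩
          · exact ⟨p2, by simp, Or.inl h2'⟩
          · exact ⟨p1, by simp, Or.inr h1'⟩
        · -- MergeInfo
          rcases hend with ⟨hpa, hqb⟩ | ⟨hpb, hqa⟩ <;>
            rcases hend2 with ⟨h1c, h2d⟩ | ⟨h1d, h2c⟩
          · exact ⟨p2, by simp, p1, by simp, (fun he => hp12 he.symm), Or.inl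
              ⟨Or.inr (by rw [hlast] at hpa; exact hpa), Or.inr h1c⟩⟩
          · exact ⟨q, by simp, p1, by simp, (fun he => hp1q he.symm), Or.inr
              ⟨Or.inl hqb, Or.inr h1d⟩⟩
          · exact ⟨q, by simp, p1, by simp, (fun he => hp1q he.symm), Or.inl
              ⟨Or.inl hqa, Or.inr h1c⟩⟩
          · exact ⟨q, by simp, p2, by simp, (fun he => hp2q he.symm), Or.inl
              ⟨Or.inl hqa, Or.inl h2c⟩⟩
      · -- contradiction: c would lie in both p and q
        exfalso
        have hcp' : c ∈ p1 ++ p2 := by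
          rcases hend2 with ⟨h1', _⟩ | ⟨_, h2'⟩
          · exact List.mem_append_left _ (mem_of_getLast?' h1')
          · exact List.mem_append_right _ (List.mem_of_mem_head? h2')
        have hcq' : c ∈ q := by
          rcases hend3 with ⟨h1', _⟩ | ⟨_, h2'⟩
          · exact heqq ▸ List.mem_append_left _ (mem_of_getLast?' h1')
          · exact heqq ▸ List.mem_append_right _ (List.mem_of_mem_head? h2')
        exact hdisj hcp' hcq'

end TwoSwitchAux

namespace TwoSwitchAux

variable {V : Type*}

lemma goodsplit_append {a b c d : V} {S T : List (List V)} {m n : ℕ}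
    (hdisj : S.flatten.Disjoint T.flatten)
    (hS : GoodSplit S m a b c d) (hT : GoodSplit T n a b c d) :
    GoodSplit (S ++ T) (m + n) a b c d := by
  have hlen : (S ++ T).length = S.length + T.length := List.length_append
  -- basic cross facts
  have cross : ∀ v : V, HasEnd S v → HasEnd T v → False := fun v h1 h2 =>
    hdisj h1.mem_flatten h2.mem_flatten
  have crossne : ∀ (u w : List V) (v v' : V), u ∈ S → w ∈ T → EndAt u v → EndAt w v' → u ≠ w := by
    intro u w v v' hu hw he1 he2 heq
    subst heq
    exact hdisj (List.mem_flatten.mpr ⟨u, hu, he1.mem⟩) (List.mem_flatten.mpr ⟨u, hw, he1.mem⟩)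
  rcases hS with h1 | ⟨h1, hi⟩ | ⟨h1, ha, hb, hc, hd, hm⟩
  · rcases hT with h2 | ⟨h2, hi2⟩ | ⟨h2, ha2, hb2, hc2, hd2, hm2⟩
    · exact Or.inl (by omega)
    · refine Or.inr (Or.inl ⟨by omega, ?_⟩)
      rcases hi2 with ⟨x1, x2⟩ | ⟨x1, x2⟩
      · exact Or.inl ⟨x1.append_right, x2.append_right⟩
      · exact Or.inr ⟨x1.append_right, x2.append_right⟩
    · exact Or.inr (Or.inr ⟨by omega, ha2.append_right, hb2.append_right,
        hc2.append_right, hd2.append_right, hm2.append_right⟩)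
  · rcases hT with h2 | ⟨h2, hi2⟩ | ⟨h2, ha2, hb2, hc2, hd2, hm2⟩
    · refine Or.inr (Or.inl ⟨by omega, ?_⟩)
      rcases hi with ⟨x1, x2⟩ | ⟨x1, x2⟩
      · exact Or.inl ⟨x1.append_left, x2.append_left⟩
      · exact Or.inr ⟨x1.append_left, x2.append_left⟩
    · -- both cut one pair; they must be different pairs
      rcases hi with ⟨x1, x2⟩ | ⟨x1, x2⟩ <;> rcases hi2 with ⟨y1, y2⟩ | ⟨y1, y2⟩
      · exact (cross a x1 y1).elim
      · -- S cut {a,b}, T cut {c,d}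
        refine Or.inr (Or.inr ⟨by omega, x1.append_left, x2.append_left,
          y1.append_right, y2.append_right, ?_⟩)
        rcases x1 with ⟨u, hu, heu⟩
        rcases y1 with ⟨w, hw, hew⟩
        exact ⟨u, List.mem_append_left _ hu, w, List.mem_append_right _ hw,
          crossne u w a c hu hw heu hew, Or.inl ⟨heu, hew⟩⟩
      · -- S cut {c,d}, T cut {a,b}
        refine Or.inr (Or.inr ⟨by omega, y1.append_right, y2.append_right,
          x1.append_left, x2.append_left, ?_⟩)
        rcases y1 with ⟨u, hu, heu⟩
        rcases x1 with ⟨w, hw, hew⟩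
        exact ⟨u, List.mem_append_right _ hu, w, List.mem_append_left _ hw,
          Ne.symm (crossne w u c a hw hu hew heu), Or.inl ⟨heu, hew⟩⟩
      · exact (cross c x1 y1).elim
    · rcases hi with ⟨x1, _⟩ | ⟨x1, _⟩
      · exact (cross a x1 ha2).elim
      · exact (cross c x1 hc2).elim
  · rcases hT with h2 | ⟨h2, hi2⟩ | ⟨h2, ha2, hb2, hc2, hd2, hm2⟩
    · exact Or.inr (Or.inr ⟨by omega, ha.append_left, hb.append_left,
        hc.append_left, hd.append_left, hm.append_left⟩)
    · rcases hi2 with ⟨y1, _⟩ | ⟨y1, _⟩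
      · exact (cross a ha y1).elim
      · exact (cross c hc y1).elim
    · exact (cross a ha ha2).elim

end TwoSwitchAux

namespace TwoSwitchAux

variable {V : Type*}

/-- Splitting a whole path system at the pairs `{a,b}` and `{c,d}`. -/
lemma cover_split (R : V → V → Prop) (a b c d : V) :
    ∀ L : List (List V), (∀ l ∈ L, l ≠ [] ∧ l.Chain' R) → L.flatten.Nodup →
      ∃ L' : List (List V), L'.flatten = L.flatten ∧
        (∀ m ∈ L', m ≠ [] ∧ m.Chain' (Rcut (Rcut R a b) c d)) ∧
        GoodSplit L' L.length a b c d
  | [] => fun _ _ => ⟨[], by simp, by simp, Or.inl (by simp)⟩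
  | l :: L => fun h1 h2 => by
      have hl := h1 l (List.mem_cons_self)
      have h2' : (l ++ L.flatten).Nodup := by simpa using h2
      rw [List.nodup_append'] at h2'
      obtain ⟨hndl, hndL, hdisj⟩ := h2'
      obtain ⟨S, hSf, hSm, hSg⟩ := single_split R a b c d l hl.1 hndl hl.2
      obtain ⟨L', hLf, hLm, hLg⟩ :=
        cover_split R a b c d L (fun m hm => h1 m (List.mem_cons_of_mem _ hm)) hndL
      refine ⟨S ++ L', ?_, ?_, ?_⟩
      · rw [List.flatten_append, hSf, hLf]; simp
      · intro m hm
        rcases List.mem_append.mp hm with hm | hm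
        · exact hSm m hm
        · exact hLm m hm
      · have hgs : GoodSplit (S ++ L') (1 + L.length) a b c d := by
          apply goodsplit_append ?_ hSg hLg
          rw [hSf, hLf]
          exact hdisj
        have : (l :: L).length = 1 + L.length := by simp [Nat.add_comm]
        rw [this]
        exact hgs

lemma exists_perm_cons_cons {α : Type*} {u w : α} {L : List α}
    (hu : u ∈ L) (hw : w ∈ L) (huw : u ≠ w) :
    ∃ rest : List α, List.Perm L (u :: w :: rest) := by
  obtain ⟨A, B, rfl⟩ := List.append_of_mem hu
  rcases List.mem_append.mp hw with hwA | hwB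
  · obtain ⟨A1, A2, rfl⟩ := List.append_of_mem hwA
    refine ⟨A1 ++ (A2 ++ B), ?_⟩
    have p1 : List.Perm ((A1 ++ w :: A2) ++ u :: B) (u :: ((A1 ++ w :: A2) ++ B)) :=
      List.perm_middle
    have p2 : List.Perm ((A1 ++ w :: A2) ++ B) (w :: (A1 ++ (A2 ++ B))) := by
      have : (A1 ++ w :: A2) ++ B = A1 ++ w :: (A2 ++ B) := by simp
      rw [this]
      exact List.perm_middle
    exact p1.trans (p2.cons u)
  · rcases List.mem_cons.mp hwB with rfl | hwB
    · exact absurd rfl huw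
    · obtain ⟨B1, B2, rfl⟩ := List.append_of_mem hwB
      refine ⟨A ++ (B1 ++ B2), ?_⟩
      have p1 : List.Perm (A ++ u :: (B1 ++ w :: B2)) (u :: (A ++ (B1 ++ w :: B2))) :=
        List.perm_middle
      have p2 : List.Perm (A ++ (B1 ++ w :: B2)) (w :: (A ++ (B1 ++ B2))) := by
        have h1 : A ++ (B1 ++ w :: B2) = (A ++ B1) ++ w :: B2 := by simp
        have h2 : A ++ (B1 ++ B2) = (A ++ B1) ++ B2 := by simp
        rw [h1, h2]
        exact List.perm_middle
      exact p1.trans (p2.cons u)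

/-- Merging two distinct segments with adjacent endpoints into a single path. -/
lemma merge_lemma (H : SimpleGraph V) (L : List (List V))
    (h1 : ∀ m ∈ L, m ≠ [] ∧ m.Chain' H.Adj) (h2 : L.flatten.Nodup)
    {u w : List V} (hu : u ∈ L) (hw : w ∈ L) (huw : u ≠ w)
    {x y : V} (hx : EndAt u x) (hy : EndAt w y) (hadj : H.Adj x y) :
    ∃ L' : List (List V), (∀ m ∈ L', m ≠ [] ∧ m.Chain' H.Adj) ∧ L'.flatten.Nodup ∧
      (∀ v : V, v ∈ L.flatten → v ∈ L'.flatten) ∧ L'.length + 1 = L.length := by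
  classical
  set u' := if u.getLast? = some x then u else u.reverse with hu'def
  set w' := if w.head? = some y then w else w.reverse with hw'def
  have hune : u ≠ [] := (h1 u hu).1
  have hwne : w ≠ [] := (h1 w hw).1
  have huperm : List.Perm u' u := by
    rw [hu'def]; split
    · exact List.Perm.refl u
    · exact List.reverse_perm u
  have hwperm : List.Perm w' w := by
    rw [hw'def]; split
    · exact List.Perm.refl w
    · exact List.reverse_perm w
  have hu'last : u'.getLast? = some x := by
    rw [hu'def]; split
    · assumption
    · rcases hx with hh | hh
      · rw [List.getLast?_reverse]; exact hh
      · exact absurd hh (by assumption)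
  have hw'head : w'.head? = some y := by
    rw [hw'def]; split
    · assumption
    · rcases hy with hh | hh
      · exact absurd hh (by assumption)
      · rw [List.head?_reverse]; exact hh
  have hu'chain : u'.Chain' H.Adj := by
    rw [hu'def]; split
    · exact (h1 u hu).2
    · simp only [List.Chain', List.isChain_reverse]
      exact ((h1 u hu).2).imp (fun _ _ h => h.symm)
  have hw'chain : w'.Chain' H.Adj := by
    rw [hw'def]; split
    · exact (h1 w hw).2
    · simp only [List.Chain', List.isChain_reverse]
      exact ((h1 w hw).2).imp (fun _ _ h => h.symm)
  have hu'ne : u' ≠ [] := by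
    intro hh; rw [hh] at hu'last; simp at hu'last
  have hw'ne : w' ≠ [] := by
    intro hh; rw [hh] at hw'head; simp at hw'head
  obtain ⟨rest, hperm⟩ := exists_perm_cons_cons hu hw huw
  refine ⟨(u' ++ w') :: rest, ?_, ?_, ?_, ?_⟩
  · intro m hm
    rcases List.mem_cons.mp hm with rfl | hm
    · refine ⟨by simp [hu'ne], ?_⟩
      simp only [List.Chain', List.isChain_append]
      refine ⟨hu'chain, hw'chain, ?_⟩
      intro p hp q hq
      rw [hu'last] at hp
      rw [hw'head] at hq
      cases hp; cases hq
      · exact hadj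
    · exact h1 m (hperm.mem_iff.mpr (List.mem_cons_of_mem _ (List.mem_cons_of_mem _ hm)))
  · -- nodup
    have hpj : List.Perm L.flatten (((u' ++ w') :: rest).flatten) := by
      have h1p : List.Perm L.flatten ((u :: w :: rest).flatten) := (hperm).flatten
      have h2p : List.Perm ((u :: w :: rest).flatten) (((u' ++ w') :: rest).flatten) := by
        simp only [List.flatten_cons]
        rw [← List.append_assoc]
        exact (((huperm.append hwperm).symm).append (List.Perm.refl rest.flatten))
      exact h1p.trans h2p
    exact hpj.nodup_iff.mp h2
  · intro v hv
    have hpj : List.Perm L.flatten (((u' ++ w') :: rest).flatten) := by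
      have h1p : List.Perm L.flatten ((u :: w :: rest).flatten) := (hperm).flatten
      have h2p : List.Perm ((u :: w :: rest).flatten) (((u' ++ w') :: rest).flatten) := by
        simp only [List.flatten_cons]
        rw [← List.append_assoc]
        exact (((huperm.append hwperm).symm).append (List.Perm.refl rest.flatten))
      exact h1p.trans h2p
    exact hpj.mem_iff.mp hv
  · have := hperm.length_eq
    simp only [List.length_cons] at this ⊢
    omega

end TwoSwitchAux

namespace TwoSwitchAux

variable {V : Type*}

/-- Build a walk from a vertex and a chain of adjacent vertices. -/
def listToWalk (G : SimpleGraph V) (x : V) :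
    (l : List V) → List.Chain G.Adj x l → Σ v : V, G.Walk x v
  | [], _ => ⟨x, SimpleGraph.Walk.nil⟩
  | y :: t, hc =>
      let hc' := List.chain_cons.mp hc
      let w := listToWalk G y t hc'.2
      ⟨w.1, SimpleGraph.Walk.cons hc'.1 w.2⟩

lemma listToWalk_support (G : SimpleGraph V) :
    ∀ (x : V) (l : List V) (hc : List.Chain G.Adj x l),
      (listToWalk G x l hc).2.support = x :: l
  | x, [], _ => rfl
  | x, y :: t, hc => by
      rw [listToWalk]
      simp only [SimpleGraph.Walk.support_cons]
      rw [listToWalk_support G y t (List.chain_cons.mp hc).2]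

/-- From a list cover we get an upper bound on the path cover number. -/
lemma pathCoverNum_le_of_listCover [Fintype V] (G : SimpleGraph V) (L : List (List V))
    (h1 : ∀ l ∈ L, l ≠ [] ∧ l.Chain' G.Adj) (h2 : L.flatten.Nodup)
    (h3 : ∀ v : V, v ∈ L.flatten) :
    pathCoverNum G ≤ L.length := by
  apply Nat.sInf_le
  have hP : ∀ i : Fin L.length, ∃ (s : Σ u v : V, G.Walk u v), s.2.2.support = L.get i := by
    intro i
    have hmem : L.get i ∈ L := by rw [List.get_eq_getElem]; exact List.getElem_mem _
    obtain ⟨hne, hch⟩ := h1 _ hmem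
    cases hget : L.get i with
    | nil => exact absurd hget hne
    | cons x t =>
        have hch' : List.Chain G.Adj x t := by
          rw [hget] at hch
          exact hch
        exact ⟨⟨x, (listToWalk G x t hch').1, (listToWalk G x t hch').2⟩,
          by rw [listToWalk_support]⟩
  choose P hPs using hP
  have hnd : ∀ l ∈ L, l.Nodup := (List.nodup_flatten.mp h2).1
  have hpw : List.Pairwise List.Disjoint L := (List.nodup_flatten.mp h2).2
  have hdisj : ∀ i j : Fin L.length, i ≠ j → (L.get i).Disjoint (L.get j) := by
    intro i j hij
    rcases lt_or_gt_of_ne hij with hlt | hgt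
    · exact List.pairwise_iff_get.mp hpw i j hlt
    · exact List.disjoint_comm.mp (List.pairwise_iff_get.mp hpw j i hgt)
  refine ⟨P, ?_, ?_, ?_⟩
  · intro i
    rw [SimpleGraph.Walk.isPath_def, hPs]
    exact hnd _ (by rw [List.get_eq_getElem]; exact List.getElem_mem _)
  · intro i j hij v hvi hvj
    rw [hPs] at hvi hvj
    exact hdisj i j hij hvi hvj
  · intro v
    rcases List.mem_flatten.mp (h3 v) with ⟨l, hl, hvl⟩
    rcases List.mem_iff_get.mp hl with ⟨i, rfl⟩
    exact ⟨i, by rw [hPs]; exact hvl⟩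

/-- The defining set of `pathCoverNum` is nonempty. -/
lemma coverSet_nonempty [Fintype V] (G : SimpleGraph V) :
    {n : ℕ | ∃ P : Fin n → Σ u v : V, G.Walk u v,
      (∀ i, (P i).2.2.IsPath) ∧
      (∀ i j, i ≠ j → ∀ v : V, v ∈ (P i).2.2.support → v ∉ (P j).2.2.support) ∧
      (∀ v : V, ∃ i, v ∈ (P i).2.2.support)}.Nonempty := by
  classical
  refine ⟨Fintype.card V, fun i => ⟨(Fintype.equivFin V).symm i, (Fintype.equivFin V).symm i,
    SimpleGraph.Walk.nil⟩, ?_, ?_, ?_⟩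
  · intro i; exact SimpleGraph.Walk.IsPath.nil
  · intro i j hij v hvi hvj
    simp only [SimpleGraph.Walk.support_nil, List.mem_singleton] at hvi hvj
    exact hij (((Fintype.equivFin V).symm).injective (by rw [← hvi, ← hvj]))
  · intro v
    exact ⟨Fintype.equivFin V v, by simp⟩

/-- Extract an optimal list cover. -/
lemma exists_listCover [Fintype V] (G : SimpleGraph V) :
    ∃ L : List (List V), (∀ l ∈ L, l ≠ [] ∧ l.Chain' G.Adj) ∧ L.flatten.Nodup ∧
      (∀ v : V, v ∈ L.flatten) ∧ L.length = pathCoverNum G := by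
  have hmem := Nat.sInf_mem (coverSet_nonempty G)
  obtain ⟨P, hpath, hdisj, hcov⟩ := hmem
  refine ⟨List.ofFn (fun i => (P i).2.2.support), ?_, ?_, ?_, by simp [pathCoverNum]⟩
  · intro l hl
    rcases List.mem_ofFn.mp hl with ⟨i, rfl⟩
    exact ⟨SimpleGraph.Walk.support_ne_nil _, SimpleGraph.Walk.isChain_adj_support _⟩
  · rw [List.nodup_flatten]
    constructor
    · intro l hl
      rcases List.mem_ofFn.mp hl with ⟨i, rfl⟩
      exact (hpath i).support_nodup
    · rw [List.pairwise_ofFn]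
      intro i j hij
      exact fun v hvi hvj => hdisj i j (Fin.ne_of_lt hij) v hvi hvj
  · intro v
    rcases hcov v with ⟨i, hi⟩
    exact List.mem_flatten.mpr ⟨(P i).2.2.support, List.mem_ofFn.mpr ⟨i, rfl⟩, hi⟩

end TwoSwitchAux

open TwoSwitchAux in
lemma twoSwitch_key {V : Type*} [Fintype V] (G : SimpleGraph V) (a b c d : V)
    (hsw : Switchable G a b c d) :
    pathCoverNum (twoSwitch G a b c d) ≤ pathCoverNum G + 1 := by
  obtain ⟨hab, hac, had, hbc, hbd, hcd, hGab, hGcd, hGac, hGbd⟩ := hsw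
  set G' := twoSwitch G a b c d with hG'
  have hR2 : ∀ x y : V, Rcut (Rcut G.Adj a b) c d x y → G'.Adj x y := by
    rintro x y ⟨⟨hxy, hne1⟩, hne2⟩
    rw [hG', twoSwitch, SimpleGraph.fromEdgeSet_adj]
    refine ⟨Or.inl ⟨(SimpleGraph.mem_edgeSet G).mpr hxy, ?_⟩, hxy.ne⟩
    simp only [Set.mem_insert_iff, Set.mem_singleton_iff]
    rintro (h | h)
    · exact hne1 h
    · exact hne2 h
  have hac' : G'.Adj a c := by
    rw [hG', twoSwitch, SimpleGraph.fromEdgeSet_adj]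
    exact ⟨Or.inr (Set.mem_insert _ _), hac⟩
  have hbd' : G'.Adj b d := by
    rw [hG', twoSwitch, SimpleGraph.fromEdgeSet_adj]
    refine ⟨Or.inr ?_, hbd⟩
    simp
  obtain ⟨L, h1, h2, h3, hlen⟩ := exists_listCover G
  obtain ⟨L', hLf, hLm, hLg⟩ := cover_split G.Adj a b c d L h1 h2
  have hL'G' : ∀ m ∈ L', m ≠ [] ∧ m.Chain' G'.Adj := fun m hm =>
    ⟨(hLm m hm).1, ((hLm m hm).2).imp (fun _ _ h => hR2 _ _ h)⟩
  have h2' : L'.flatten.Nodup := by rw [hLf]; exact h2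
  have h3' : ∀ v : V, v ∈ L'.flatten := by intro v; rw [hLf]; exact h3 v
  rcases hLg with hg | ⟨hg, _⟩ | ⟨hg, _, _, _, _, hmi⟩
  · have := pathCoverNum_le_of_listCover G' L' hL'G' h2' h3'
    omega
  · have := pathCoverNum_le_of_listCover G' L' hL'G' h2' h3'
    omega
  · rcases hmi with ⟨u, hu, w, hw, hne, hcase⟩
    rcases hcase with ⟨hea, hec⟩ | ⟨heb, hed⟩
    · obtain ⟨L'', m1, m2, m3, m4⟩ :=
        merge_lemma G' L' hL'G' h2' hu hw hne hea hec hac'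
      have := pathCoverNum_le_of_listCover G' L'' m1 m2 (fun v => m3 v (h3' v))
      omega
    · obtain ⟨L'', m1, m2, m3, m4⟩ :=
        merge_lemma G' L' hL'G' h2' hu hw hne heb hed hbd'
      have := pathCoverNum_le_of_listCover G' L'' m1 m2 (fun v => m3 v (h3' v))
      omega

lemma obtained_symm {V : Type*} {G G' : SimpleGraph V}
    (h : ObtainedByTwoSwitch G G') : ObtainedByTwoSwitch G' G := by
  obtain ⟨a, b, c, d, hsw, rfl⟩ := h
  obtain ⟨hab, hac, had, hbc, hbd, hcd, hGab, hGcd, hGac, hGbd⟩ := hsw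
  have hAC : (twoSwitch G a b c d).Adj a c := by
    rw [twoSwitch, SimpleGraph.fromEdgeSet_adj]
    exact ⟨Or.inr (Set.mem_insert _ _), hac⟩
  have hBD : (twoSwitch G a b c d).Adj b d := by
    rw [twoSwitch, SimpleGraph.fromEdgeSet_adj]
    refine ⟨Or.inr ?_, hbd⟩
    simp
  have hNAB : ¬ (twoSwitch G a b c d).Adj a b := by
    rw [twoSwitch, SimpleGraph.fromEdgeSet_adj]
    rintro ⟨(⟨_, hn⟩ | hn), _⟩
    · exact hn (Set.mem_insert _ _)
    · simp only [Set.mem_insert_iff, Set.mem_singleton_iff, Sym2.eq_iff] at hn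
      rcases hn with (⟨h1, h2⟩ | ⟨h1, h2⟩) | (⟨h1, h2⟩ | ⟨h1, h2⟩)
      · exact hbc h2
      · exact hac h1
      · exact hab h1
      · exact had h1
  have hNCD : ¬ (twoSwitch G a b c d).Adj c d := by
    rw [twoSwitch, SimpleGraph.fromEdgeSet_adj]
    rintro ⟨(⟨_, hn⟩ | hn), _⟩
    · exact hn (by simp)
    · simp only [Set.mem_insert_iff, Set.mem_singleton_iff, Sym2.eq_iff] at hn
      rcases hn with (⟨h1, h2⟩ | ⟨h1, h2⟩) | (⟨h1, h2⟩ | ⟨h1, h2⟩)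
      · exact hac h1.symm
      · exact had h2.symm
      · exact hbc h1.symm
      · exact hcd h1
  have hES : (twoSwitch G a b c d).edgeSet =
      (G.edgeSet \ {s(a, b), s(c, d)}) ∪ {s(a, c), s(b, d)} := by
    rw [twoSwitch, SimpleGraph.edgeSet_fromEdgeSet]
    ext e
    simp only [Set.mem_diff, Set.mem_setOf_eq]
    constructor
    · rintro ⟨he, _⟩
      exact he
    · intro he
      refine ⟨he, ?_⟩
      intro hd
      rcases he with ⟨heG, _⟩ | he
      · exact SimpleGraph.not_isDiag_of_mem_edgeSet _ heG hd
      · rcases he with rfl | he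
        · exact hac (Sym2.mk_isDiag_iff.mp hd)
        · rw [Set.mem_singleton_iff] at he
          subst he
          exact hbd (Sym2.mk_isDiag_iff.mp hd)
  refine ⟨a, c, b, d, ⟨hac, hab, had, hbc.symm, hcd, hbd, hAC, hBD, hNAB, hNCD⟩, ?_⟩
  rw [twoSwitch, hES]
  have hset : ((G.edgeSet \ {s(a, b), s(c, d)} ∪ {s(a, c), s(b, d)}) \ {s(a, c), s(b, d)})
      ∪ {s(a, b), s(c, d)} = G.edgeSet := by
    ext e
    simp only [Set.mem_union, Set.mem_diff, Set.mem_insert_iff, Set.mem_singleton_iff]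
    constructor
    · rintro (⟨(⟨he, _⟩ | hq), hnq⟩ | he)
      · exact he
      · exact absurd hq hnq
      · rcases he with rfl | rfl
        · exact (SimpleGraph.mem_edgeSet G).mpr hGab
        · exact (SimpleGraph.mem_edgeSet G).mpr hGcd
    · intro he
      by_cases hp : e = s(a, b) ∨ e = s(c, d)
      · exact Or.inr hp
      · refine Or.inl ⟨Or.inl ⟨he, ?_⟩, ?_⟩
        · intro hh
          exact hp hh
        · rintro (rfl | rfl)
          · exact hGac ((SimpleGraph.mem_edgeSet G).mp he)
          · exact hGbd ((SimpleGraph.mem_edgeSet G).mp he)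
  rw [hset, SimpleGraph.fromEdgeSet_edgeSet]

/-- the path-covering number is stable under 2-switch. -/
theorem stmt_17 {V : Type*} [Fintype V] (G G' : SimpleGraph V)
    (h : ObtainedByTwoSwitch G G') :
    |(pathCoverNum G' : ℤ) - (pathCoverNum G : ℤ)| ≤ 1 := by
  obtain ⟨a, b, c, d, hsw, hEq⟩ := h
  have k1 : pathCoverNum G' ≤ pathCoverNum G + 1 := by
    have := twoSwitch_key G a b c d hsw
    rw [← hEq] at this
    exact this
  obtain ⟨a', b', c', d', hsw', hEq'⟩ := obtained_symm ⟨a, b, c, d, hsw, hEq⟩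
  have k2 : pathCoverNum G ≤ pathCoverNum G' + 1 := by
    have := twoSwitch_key G' a' b' c' d' hsw'
    rw [← hEq'] at this
    exact this
  rw [abs_le]
  constructor
  · omega
  · omega
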